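/- Let 𝒜_k = { (φ₁,…,φ_k) : φ_i : V → [0,1], Σᵢ φ_i = 1 }. The relaxed energy Λ^α_k(φ₁,…,φ_k) = Σᵢ λ^α(φ_i) is a concave function on the convex set 𝒜_k, and hence attains its minimum over 𝒜_k at an extreme point, i.e., at a tuple of indicator functions of a k-partition of V. -/
import Mathlib


open Finset

/-- Dirichlet energy (gradient) form: `(1/2) ∑_{i,j} w_{ij} (ψ_i - ψ_j)²`. -/
noncomputable def gradE {n : ℕ} (w : Fin n → Fin n → ℝ) (ψ : Fin n → ℝ) : ℝ :=
  (1 / 2) * ∑ i, ∑ j, w i j * (ψ i - ψ j) ^ 2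

/-- Weighted squared norm `∑ i, d_i^r ψ_i²`. -/
noncomputable def dnorm {n : ℕ} (d : Fin n → ℝ) (r : ℝ) (ψ : Fin n → ℝ) : ℝ :=
  ∑ i, Real.rpow (d i) r * ψ i ^ 2

/-- First Dirichlet eigenvalue of the subset `S`. -/
noncomputable def dirEig {n : ℕ} (w : Fin n → Fin n → ℝ) (d : Fin n → ℝ) (r : ℝ)
    (S : Finset (Fin n)) : ℝ :=
  sInf { e : ℝ | ∃ ψ : Fin n → ℝ, (∀ i, i ∉ S → ψ i = 0) ∧ dnorm d r ψ = 1 ∧ e = gradE w ψ }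

/-- Relaxed eigenvalue `λ^α(φ)`. -/
noncomputable def lamAlpha {n : ℕ} (w : Fin n → Fin n → ℝ) (d : Fin n → ℝ) (r α : ℝ)
    (φ : Fin n → ℝ) : ℝ :=
  sInf { e : ℝ | ∃ ψ : Fin n → ℝ, dnorm d r ψ = 1 ∧
    e = gradE w ψ + α * ∑ i, Real.rpow (d i) r * (1 - φ i) * ψ i ^ 2 }

/-- Graph Laplacian `Δ_r = D^{-r}(D - W)` applied to `ψ` at vertex `i`. -/
noncomputable def lapApply {n : ℕ} (w : Fin n → Fin n → ℝ) (d : Fin n → ℝ) (r : ℝ)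
    (ψ : Fin n → ℝ) (i : Fin n) : ℝ :=
  Real.rpow (d i) (-r) * (d i * ψ i - ∑ j, w i j * ψ j)

/-- Indicator function of a vertex subset. -/
def ind {n : ℕ} (S : Finset (Fin n)) : Fin n → ℝ := fun i => if i ∈ S then 1 else 0

/-- The admissible class `𝒜_k`. -/
def memA {k n : ℕ} (Φ : Fin k → Fin n → ℝ) : Prop :=
  (∀ i v, 0 ≤ Φ i v ∧ Φ i v ≤ 1) ∧ ∀ v, ∑ i, Φ i v = 1

/-- The relaxed partition energy `Λ^α_k`. -/
noncomputable def LamK {k n : ℕ} (w : Fin n → Fin n → ℝ) (d : Fin n → ℝ) (r α : ℝ)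
    (Φ : Fin k → Fin n → ℝ) : ℝ :=
  ∑ i, lamAlpha w d r α (Φ i)

/-- The weighted graph is connected. -/
def gconn {n : ℕ} (w : Fin n → Fin n → ℝ) : Prop :=
  ∀ i j : Fin n, Relation.ReflTransGen (fun a b => 0 < w a b) i j

section Aux
variable {n : ℕ} (w : Fin n → Fin n → ℝ) (d : Fin n → ℝ) (r α : ℝ)

lemma gradE_nonneg (hnn : ∀ i j, 0 ≤ w i j) (ψ : Fin n → ℝ) : 0 ≤ gradE w ψ := by
  unfold gradE
  have h : (0:ℝ) ≤ ∑ i, ∑ j, w i j * (ψ i - ψ j) ^ 2 :=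
    Finset.sum_nonneg fun i _ => Finset.sum_nonneg fun j _ =>
      mul_nonneg (hnn i j) (sq_nonneg _)
  linarith

lemma lamAlpha_bdd (hnn : ∀ i j, 0 ≤ w i j) (hdpos : ∀ i, 0 < d i) (hα : 0 ≤ α)
    (φ : Fin n → ℝ) (hφ : ∀ v, φ v ≤ 1) :
    (0:ℝ) ∈ lowerBounds { e : ℝ | ∃ ψ : Fin n → ℝ, dnorm d r ψ = 1 ∧
      e = gradE w ψ + α * ∑ i, Real.rpow (d i) r * (1 - φ i) * ψ i ^ 2 } := by
  rintro e ⟨ψ, -, rfl⟩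
  have h1 := gradE_nonneg w hnn ψ
  have h2 : (0:ℝ) ≤ ∑ i, Real.rpow (d i) r * (1 - φ i) * ψ i ^ 2 :=
    Finset.sum_nonneg fun i _ =>
      mul_nonneg (mul_nonneg (Real.rpow_nonneg (hdpos i).le r) (by linarith [hφ i]))
        (sq_nonneg _)
  nlinarith

lemma lamAlpha_concave (hnn : ∀ i j, 0 ≤ w i j) (hdpos : ∀ i, 0 < d i) (hα : 0 ≤ α)
    (m : ℕ) (lam : Fin m → ℝ) (hlam : ∀ j, 0 ≤ lam j) (hsum : ∑ j, lam j = 1)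
    (φ : Fin m → Fin n → ℝ) (hφ : ∀ j v, φ j v ≤ 1) :
    ∑ j, lam j * lamAlpha w d r α (φ j) ≤
      lamAlpha w d r α (fun v => ∑ j, lam j * φ j v) := by
  by_cases h : ∃ ψ : Fin n → ℝ, dnorm d r ψ = 1
  · apply le_csInf
    · obtain ⟨ψ, hψ⟩ := h; exact ⟨_, ψ, hψ, rfl⟩
    rintro e ⟨ψ, hψ, rfl⟩
    have keyB : ∑ i, Real.rpow (d i) r * (1 - ∑ j, lam j * φ j i) * ψ i ^ 2
        = ∑ j, lam j * ∑ i, Real.rpow (d i) r * (1 - φ j i) * ψ i ^ 2 := by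
      calc ∑ i, Real.rpow (d i) r * (1 - ∑ j, lam j * φ j i) * ψ i ^ 2
          = ∑ i, ∑ j, lam j * (Real.rpow (d i) r * (1 - φ j i) * ψ i ^ 2) := by
            refine Finset.sum_congr rfl fun i _ => ?_
            have e1 : ∑ j, lam j * (1 - φ j i) = 1 - ∑ j, lam j * φ j i := by
              simp [mul_sub, Finset.sum_sub_distrib, hsum]
            calc Real.rpow (d i) r * (1 - ∑ j, lam j * φ j i) * ψ i ^ 2
                = (∑ j, lam j * (1 - φ j i)) * (Real.rpow (d i) r * ψ i ^ 2) := by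
                  rw [e1]; ring
              _ = ∑ j, lam j * (Real.rpow (d i) r * (1 - φ j i) * ψ i ^ 2) := by
                  rw [Finset.sum_mul]
                  exact Finset.sum_congr rfl fun j _ => by ring
        _ = ∑ j, lam j * ∑ i, Real.rpow (d i) r * (1 - φ j i) * ψ i ^ 2 := by
            rw [Finset.sum_comm]
            exact Finset.sum_congr rfl fun j _ => by rw [Finset.mul_sum]
    calc ∑ j, lam j * lamAlpha w d r α (φ j)
        ≤ ∑ j, lam j * (gradE w ψ + α * ∑ i, Real.rpow (d i) r * (1 - φ j i) * ψ i ^ 2) := by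
          refine Finset.sum_le_sum fun j _ => mul_le_mul_of_nonneg_left ?_ (hlam j)
          exact csInf_le ⟨0, lamAlpha_bdd w d r α hnn hdpos hα (φ j) (hφ j)⟩ ⟨ψ, hψ, rfl⟩
      _ = gradE w ψ + α * ∑ i, Real.rpow (d i) r * (1 - ∑ j, lam j * φ j i) * ψ i ^ 2 := by
          rw [keyB, Finset.mul_sum]
          simp only [mul_add, Finset.sum_add_distrib, ← Finset.sum_mul, hsum, one_mul]
          congr 1
          exact Finset.sum_congr rfl fun j _ => by ring
  · have hempty : ∀ φ' : Fin n → ℝ, lamAlpha w d r α φ' = 0 := by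
      intro φ'
      unfold lamAlpha
      have : { e : ℝ | ∃ ψ : Fin n → ℝ, dnorm d r ψ = 1 ∧
          e = gradE w ψ + α * ∑ i, Real.rpow (d i) r * (1 - φ' i) * ψ i ^ 2 } = ∅ := by
        ext e
        simp only [Set.mem_setOf_eq, Set.mem_empty_iff_false, iff_false, not_exists]
        intro ψ hψ
        exact absurd ⟨ψ, hψ.1⟩ h
      rw [this, Real.sInf_empty]
    simp only [hempty, mul_zero, Finset.sum_const_zero]
    exact le_refl _

end Aux

section Aux2
variable {n : ℕ} (w : Fin n → Fin n → ℝ) (d : Fin n → ℝ) (r α : ℝ)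

lemma vertex_step (hnn : ∀ i j, 0 ≤ w i j) (hdpos : ∀ i, 0 < d i) (hα : 0 ≤ α)
    {k : ℕ} (Φ : Fin k → Fin n → ℝ) (hΦ : memA Φ) (v : Fin n) :
    ∃ Ψ : Fin k → Fin n → ℝ, memA Ψ ∧ LamK w d r α Ψ ≤ LamK w d r α Φ ∧
      (∀ i, Ψ i v = 0 ∨ Ψ i v = 1) ∧ (∀ i v', v' ≠ v → Ψ i v' = Φ i v') := by
  classical
  set lam : Fin k → ℝ := fun j => Φ j v with hlam_def
  set Ψ' : Fin k → Fin k → Fin n → ℝ :=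
    fun j i v' => if v' = v then (if i = j then 1 else 0) else Φ i v' with hΨ'
  have hlam0 : ∀ j, 0 ≤ lam j := fun j => (hΦ.1 j v).1
  have hlamsum : ∑ j, lam j = 1 := hΦ.2 v
  have hrep : ∀ i, (fun v' => ∑ j, lam j * Ψ' j i v') = Φ i := by
    intro i; funext v'
    by_cases hv : v' = v
    · subst hv
      simp only [hΨ', if_pos rfl, mul_ite, mul_one, mul_zero]
      rw [Finset.sum_ite_eq]
      simp [hlam_def]
    · simp only [hΨ', if_neg hv, ← Finset.sum_mul, hlamsum, one_mul]
  have hmemA' : ∀ j, memA (Ψ' j) := by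
    intro j
    constructor
    · intro i v'
      by_cases hv : v' = v
      · subst hv; simp only [hΨ', if_pos rfl]
        by_cases hij : i = j <;> simp [hij]
      · simp only [hΨ', if_neg hv]; exact hΦ.1 i v'
    · intro v'
      by_cases hv : v' = v
      · subst hv; simp only [hΨ', if_pos rfl]
        rw [Finset.sum_ite_eq']; simp
      · simp only [hΨ', if_neg hv]; exact hΦ.2 v'
  have hbound : ∀ j i v', Ψ' j i v' ≤ 1 := fun j i v' => ((hmemA' j).1 i v').2
  have hkey : ∑ j, lam j * LamK w d r α (Ψ' j) ≤ LamK w d r α Φ := by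
    have h1 : ∀ i, ∑ j, lam j * lamAlpha w d r α (Ψ' j i) ≤ lamAlpha w d r α (Φ i) := by
      intro i
      have := lamAlpha_concave w d r α hnn hdpos hα k lam hlam0 hlamsum
        (fun j => Ψ' j i) (fun j v' => hbound j i v')
      rwa [hrep i] at this
    calc ∑ j, lam j * LamK w d r α (Ψ' j)
        = ∑ i, ∑ j, lam j * lamAlpha w d r α (Ψ' j i) := by
          rw [Finset.sum_comm]
          exact Finset.sum_congr rfl fun j _ => by rw [LamK, Finset.mul_sum]
      _ ≤ ∑ i, lamAlpha w d r α (Φ i) := Finset.sum_le_sum fun i _ => h1 i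
      _ = LamK w d r α Φ := rfl
  have hexists : ∃ j, LamK w d r α (Ψ' j) ≤ LamK w d r α Φ := by
    by_contra hcon
    push_neg at hcon
    have hj0 : ∃ j, 0 < lam j := by
      by_contra hall
      push_neg at hall
      have : ∑ j, lam j = 0 :=
        Finset.sum_eq_zero fun j _ => le_antisymm (hall j) (hlam0 j)
      rw [hlamsum] at this; norm_num at this
    obtain ⟨j0, hj0⟩ := hj0
    have hlt : ∑ j, lam j * LamK w d r α Φ < ∑ j, lam j * LamK w d r α (Ψ' j) :=
      Finset.sum_lt_sum
        (fun j _ => mul_le_mul_of_nonneg_left (hcon j).le (hlam0 j))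
        ⟨j0, Finset.mem_univ j0, mul_lt_mul_of_pos_left (hcon j0) hj0⟩
    rw [← Finset.sum_mul, hlamsum, one_mul] at hlt
    exact absurd hkey (not_le.mpr hlt)
  obtain ⟨j, hj⟩ := hexists
  refine ⟨Ψ' j, hmemA' j, hj, ?_, ?_⟩
  · intro i
    simp only [hΨ', if_pos rfl]
    by_cases hij : i = j <;> simp [hij]
  · intro i v' hv'
    simp only [hΨ', if_neg hv']

lemma all_binary (hnn : ∀ i j, 0 ≤ w i j) (hdpos : ∀ i, 0 < d i) (hα : 0 ≤ α)
    {k : ℕ} (T : Finset (Fin n)) (Φ : Fin k → Fin n → ℝ) (hΦ : memA Φ) :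
    ∃ Ψ : Fin k → Fin n → ℝ, memA Ψ ∧ LamK w d r α Ψ ≤ LamK w d r α Φ ∧
      ∀ i, ∀ v ∈ T, Ψ i v = 0 ∨ Ψ i v = 1 := by
  classical
  induction T using Finset.induction_on generalizing Φ with
  | empty => exact ⟨Φ, hΦ, le_refl _, by simp⟩
  | @insert a s ha ih =>
    obtain ⟨Ψ, hmem, hle, hbin⟩ := ih Φ hΦ
    obtain ⟨Ψ', hmem', hle', hbinv, heq⟩ := vertex_step w d r α hnn hdpos hα Ψ hmem a
    refine ⟨Ψ', hmem', hle'.trans hle, ?_⟩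
    intro i v hv
    rcases Finset.mem_insert.mp hv with rfl | hvs
    · exact hbinv i
    · by_cases hva : v = a
      · subst hva; exact hbinv i
      · rw [heq i v hva]; exact hbin i v hvs

end Aux2

/-- `Λ^α_k` is concave on the convex set `𝒜_k` and attains its minimum at
a tuple of indicator functions of a `k`-partition of `V`. -/
theorem LamK_concave_min_at_indicator
    (n k : ℕ) (hk : 0 < k)
    (w : Fin n → Fin n → ℝ)
    (hsym : ∀ i j, w i j = w j i) (hnn : ∀ i j, 0 ≤ w i j)
    (r : ℝ) (hr : r ∈ Set.Icc (0 : ℝ) 1)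
    (d : Fin n → ℝ) (hd : ∀ i, d i = ∑ j, w i j) (hdpos : ∀ i, 0 < d i)
    (α : ℝ) (hα : 0 < α) :
    (∀ Φ Ψ : Fin k → Fin n → ℝ, memA Φ → memA Ψ → ∀ t : ℝ, t ∈ Set.Icc (0 : ℝ) 1 →
      t * LamK w d r α Φ + (1 - t) * LamK w d r α Ψ ≤
        LamK w d r α (fun i v => t * Φ i v + (1 - t) * Ψ i v)) ∧
    (∃ ℓ : Fin n → Fin k,
      memA (fun i v => if ℓ v = i then (1 : ℝ) else 0) ∧
      ∀ Φ : Fin k → Fin n → ℝ, memA Φ →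
        LamK w d r α (fun i v => if ℓ v = i then (1 : ℝ) else 0) ≤ LamK w d r α Φ) := by
  classical
  constructor
  · intro Φ Ψ hΦ hΨ t ht
    have h2 : ∀ i : Fin k,
        t * lamAlpha w d r α (Φ i) + (1 - t) * lamAlpha w d r α (Ψ i) ≤
          lamAlpha w d r α (fun v => t * Φ i v + (1 - t) * Ψ i v) := by
      intro i
      have hc := lamAlpha_concave w d r α hnn hdpos hα.le 2 ![t, 1 - t]
        (by intro j; fin_cases j <;> simp <;> linarith [ht.1, ht.2])
        (by simp [Fin.sum_univ_two])
        ![Φ i, Ψ i]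
        (by intro j v; fin_cases j
            · simpa using (hΦ.1 i v).2
            · simpa using (hΨ.1 i v).2)
      simpa [Fin.sum_univ_two] using hc
    calc t * LamK w d r α Φ + (1 - t) * LamK w d r α Ψ
        = ∑ i, (t * lamAlpha w d r α (Φ i) + (1 - t) * lamAlpha w d r α (Ψ i)) := by
          rw [LamK, LamK, Finset.mul_sum, Finset.mul_sum, Finset.sum_add_distrib]
      _ ≤ ∑ i, lamAlpha w d r α (fun v => t * Φ i v + (1 - t) * Ψ i v) :=
          Finset.sum_le_sum fun i _ => h2 i
      _ = LamK w d r α (fun i v => t * Φ i v + (1 - t) * Ψ i v) := rfl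
  · have hindA : ∀ ℓ : Fin n → Fin k, memA (fun i v => if ℓ v = i then (1:ℝ) else 0) := by
      intro ℓ
      constructor
      · intro i v; by_cases h : ℓ v = i <;> simp [h]
      · intro v; rw [Finset.sum_ite_eq]; simp
    obtain ⟨L, -, hmin⟩ := Finset.exists_min_image Finset.univ
      (fun ℓ : Fin n → Fin k => LamK w d r α (fun i v => if ℓ v = i then (1:ℝ) else 0))
      ⟨fun _ => ⟨0, hk⟩, Finset.mem_univ _⟩
    refine ⟨L, hindA L, ?_⟩
    intro Φ hΦ
    obtain ⟨Ψ, hmem, hle, hbin⟩ := all_binary w d r α hnn hdpos hα.le Finset.univ Φ hΦ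
    have hexist : ∀ v, ∃ i, Ψ i v = 1 := by
      intro v
      by_contra hc; push_neg at hc
      have hz : ∀ i, Ψ i v = 0 :=
        fun i => (hbin i v (Finset.mem_univ v)).resolve_right (hc i)
      have hs := hmem.2 v
      rw [Finset.sum_eq_zero (fun i _ => hz i)] at hs
      norm_num at hs
    choose ℓ hℓ using hexist
    have heqfun : (fun i v => if ℓ v = i then (1:ℝ) else 0) = Ψ := by
      funext i v
      by_cases h : ℓ v = i
      · subst h; simp [hℓ v]
      · simp only [if_neg h]
        rcases hbin i v (Finset.mem_univ v) with h0 | h1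
        · exact h0.symm
        · exfalso
          have hsum := hmem.2 v
          have h2 : (2:ℝ) ≤ ∑ j, Ψ j v := by
            have hmono := Finset.sum_le_sum_of_subset_of_nonneg
              (Finset.subset_univ ({ℓ v, i} : Finset (Fin k)))
              (fun j _ _ => (hmem.1 j v).1)
            calc (2:ℝ) = ∑ j ∈ ({ℓ v, i} : Finset (Fin k)), Ψ j v := by
                  rw [Finset.sum_pair h, hℓ v, h1]; norm_num
              _ ≤ ∑ j, Ψ j v := hmono
          rw [hsum] at h2; norm_num at h2
    calc LamK w d r α (fun i v => if L v = i then (1:ℝ) else 0)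
        ≤ LamK w d r α (fun i v => if ℓ v = i then (1:ℝ) else 0) :=
          hmin ℓ (Finset.mem_univ ℓ)
      _ = LamK w d r α Ψ := by rw [heqfun]
      _ ≤ LamK w d r α Φ := hle
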